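/- Hat/box lower bound via measure: Let μ be the Lebesgue (coin-flipping) measure on {0,1}^ℕ. For any measurable functions n : {0,1}^ℕ → ℕ and g : {0,1}^ℕ → {0,1} such that for every x, the values n(x) and g(x) depend only on the coordinates of x other than coordinate n(x) (formally: if x and y agree off coordinate n(x) then n(y) = n(x) and g(y) = g(x)), the probability that g(x) = x(n(x)) equals 1/2. -/
import Mathlib


open MeasureTheory
open scoped ENNReal

namespace BlindGuess

/-- The collection of cylinder sets. -/
def Cyl : Set (Set (ℕ → Bool)) :=
  {S | ∃ (s : Finset ℕ) (f : ℕ → Bool), S = {x | ∀ n ∈ s, x n = f n}}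

lemma isPiSystem_cyl : IsPiSystem Cyl := by
  rintro _ ⟨s, f, rfl⟩ _ ⟨t, f', rfl⟩ hne
  obtain ⟨z, hz1, hz2⟩ := hne
  refine ⟨s ∪ t, fun m => if m ∈ s then f m else f' m, ?_⟩
  ext x
  simp only [Set.mem_inter_iff, Set.mem_setOf_eq, Finset.mem_union]
  constructor
  · rintro ⟨h1, h2⟩ m hm
    by_cases hms : m ∈ s
    · simp [hms, h1 m hms]
    · simp [hms, h2 m (hm.resolve_left hms)]
  · intro h
    constructor
    · intro m hm
      have := h m (Or.inl hm)
      simpa [hm] using this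
    · intro m hm
      have := h m (Or.inr hm)
      by_cases hms : m ∈ s
      · have hff' : f m = f' m := by
          rw [← hz1 m hms, hz2 m hm]
        simpa [hms, hff'] using this
      · simpa [hms] using this

lemma generateFrom_cyl :
    (MeasurableSpace.pi : MeasurableSpace (ℕ → Bool)) = MeasurableSpace.generateFrom Cyl := by
  apply le_antisymm
  · rw [MeasurableSpace.pi]
    refine iSup_le fun k => ?_
    rw [← measurable_iff_comap_le]
    refine @measurable_to_countable' Bool _ _ _ (MeasurableSpace.generateFrom Cyl) _ fun b => ?_
    refine MeasurableSpace.measurableSet_generateFrom ⟨{k}, fun _ => b, ?_⟩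
    ext x
    simp
  · rw [MeasurableSpace.generateFrom_le_iff]
    rintro _ ⟨s, f, rfl⟩
    have : {x : ℕ → Bool | ∀ n ∈ s, x n = f n} = ⋂ m ∈ s, {x | x m = f m} := by
      ext x; simp
    rw [this]
    exact MeasurableSet.biInter s.countable_toSet fun m _ =>
      measurableSet_eq_fun (measurable_pi_apply m) measurable_const

lemma measurable_not' : Measurable not := measurable_of_countable _

/-- Flip coordinate `k`. -/
def F (k : ℕ) (x : ℕ → Bool) : ℕ → Bool := Function.update x k (!(x k))

lemma F_apply (k : ℕ) (x : ℕ → Bool) (m : ℕ) :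
    F k x m = if m = k then !(x k) else x m := Function.update_apply x k _ m

lemma measurable_F (k : ℕ) : Measurable (F k) := by
  rw [measurable_pi_iff]
  intro m
  simp only [F_apply]
  split
  · exact (measurable_not'.comp (measurable_pi_apply k))
  · exact measurable_pi_apply m

lemma map_F (μ : Measure (ℕ → Bool)) [IsProbabilityMeasure μ]
    (hμ : ∀ (s : Finset ℕ) (f : ℕ → Bool),
      μ {x | ∀ n ∈ s, x n = f n} = (1 / 2 : ℝ≥0∞) ^ s.card) (k : ℕ) :
    μ.map (F k) = μ := by
  have : IsProbabilityMeasure (μ.map (F k)) := Measure.isProbabilityMeasure_map (measurable_F k).aemeasurable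
  refine ext_of_generate_finite Cyl generateFrom_cyl isPiSystem_cyl ?_ (by simp)
  rintro _ ⟨s, f, rfl⟩
  rw [Measure.map_apply (measurable_F k)]
  swap
  · have : {x : ℕ → Bool | ∀ n ∈ s, x n = f n} = ⋂ m ∈ s, {x | x m = f m} := by
      ext x; simp
    rw [this]
    exact MeasurableSet.biInter s.countable_toSet fun m _ =>
      measurableSet_eq_fun (measurable_pi_apply m) measurable_const
  have hpre : (F k) ⁻¹' {x | ∀ n ∈ s, x n = f n}
      = {x | ∀ n ∈ s, x n = Function.update f k (!(f k)) n} := by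
    ext x
    simp only [Set.mem_preimage, Set.mem_setOf_eq]
    constructor
    · intro h m hm
      have := h m hm
      rw [F_apply] at this
      rw [Function.update_apply]
      by_cases hmk : m = k
      · subst hmk
        simp only [if_pos rfl] at this ⊢
        rw [← this]; simp
      · simpa [hmk] using this
    · intro h m hm
      have := h m hm
      rw [Function.update_apply] at this
      rw [F_apply]
      by_cases hmk : m = k
      · subst hmk
        simp only [if_pos rfl] at this ⊢
        rw [this]; simp
      · simpa [hmk] using this
  rw [hpre, hμ, hμ]

end BlindGuess

open BlindGuess

theorem blind_guess_half (μ : Measure (ℕ → Bool)) [IsProbabilityMeasure μ]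
    (hμ : ∀ (s : Finset ℕ) (f : ℕ → Bool),
      μ {x | ∀ n ∈ s, x n = f n} = (1 / 2 : ℝ≥0∞) ^ s.card)
    (n : (ℕ → Bool) → ℕ) (g : (ℕ → Bool) → Bool)
    (hn : Measurable n) (hg : Measurable g)
    (hblind : ∀ x y : ℕ → Bool, (∀ m ≠ n x, x m = y m) → n y = n x ∧ g y = g x) :
    μ {x | g x = x (n x)} = 1 / 2 := by
  set A : ℕ → Set (ℕ → Bool) := fun k => {x | n x = k ∧ g x = x k} with hA
  set B : ℕ → Set (ℕ → Bool) := fun k => {x | n x = k ∧ g x = !(x k)} with hB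
  have hmA : ∀ k, MeasurableSet (A k) := fun k =>
    (hn (measurableSet_singleton k)).inter
      (measurableSet_eq_fun hg (measurable_pi_apply k))
  have hmB : ∀ k, MeasurableSet (B k) := fun k =>
    (hn (measurableSet_singleton k)).inter
      (measurableSet_eq_fun hg (measurable_not'.comp (measurable_pi_apply k)))
  -- F k maps B k to A k
  have hFB : ∀ k, (F k) ⁻¹' (B k) = A k := by
    intro k
    ext x
    simp only [Set.mem_preimage, hA, hB, Set.mem_setOf_eq]
    constructor
    · rintro ⟨h1, h2⟩
      have hagree : ∀ m ≠ n (F k x), F k x m = x m := by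
        intro m hm
        rw [h1] at hm
        rw [F_apply, if_neg hm]
      obtain ⟨hn', hg'⟩ := hblind (F k x) x hagree
      rw [h1] at hn'
      refine ⟨hn', ?_⟩
      rw [hg', h2, F_apply, if_pos rfl]
      simp
    · rintro ⟨h1, h2⟩
      have hagree : ∀ m ≠ n x, x m = F k x m := by
        intro m hm
        rw [h1] at hm
        rw [F_apply, if_neg hm]
      obtain ⟨hn', hg'⟩ := hblind x (F k x) hagree
      rw [h1] at hn'
      refine ⟨hn', ?_⟩
      rw [hg', h2, F_apply, if_pos rfl]
      simp
  have hμAB : ∀ k, μ (A k) = μ (B k) := by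
    intro k
    rw [← hFB k, ← Measure.map_apply (measurable_F k) (hmB k), map_F μ hμ k]
  have hUA : {x | g x = x (n x)} = ⋃ k, A k := by
    ext x
    simp only [Set.mem_setOf_eq, Set.mem_iUnion, hA]
    exact ⟨fun h => ⟨n x, rfl, h⟩, fun ⟨k, hk, h⟩ => by rw [← hk] at h; exact h⟩
  have hUB : {x | g x = x (n x)}ᶜ = ⋃ k, B k := by
    ext x
    simp only [Set.mem_compl_iff, Set.mem_setOf_eq, Set.mem_iUnion, hB]
    constructor
    · intro h
      refine ⟨n x, rfl, ?_⟩
      cases hgx : g x <;> cases hx : x (n x) <;> simp_all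
    · rintro ⟨k, hk, h⟩ hcon
      rw [← hk] at h
      rw [hcon] at h
      cases x (n x) <;> simp_all
  have hdA : Pairwise (Function.onFun Disjoint A) := by
    intro i j hij
    simp only [Function.onFun, Set.disjoint_left, hA, Set.mem_setOf_eq]
    rintro x ⟨h1, -⟩ ⟨h2, -⟩
    exact hij (h1 ▸ h2 ▸ rfl)
  have hdB : Pairwise (Function.onFun Disjoint B) := by
    intro i j hij
    simp only [Function.onFun, Set.disjoint_left, hB, Set.mem_setOf_eq]
    rintro x ⟨h1, -⟩ ⟨h2, -⟩
    exact hij (h1 ▸ h2 ▸ rfl)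
  have hmSet : MeasurableSet {x : ℕ → Bool | g x = x (n x)} := by
    rw [hUA]; exact MeasurableSet.iUnion hmA
  have heq : μ {x | g x = x (n x)} = μ ({x | g x = x (n x)}ᶜ) := by
    rw [hUB, hUA, measure_iUnion hdA hmA, measure_iUnion hdB hmB]
    exact tsum_congr hμAB
  have hsum : μ {x | g x = x (n x)} + μ ({x | g x = x (n x)}ᶜ) = 1 := by
    rw [measure_add_measure_compl hmSet]; exact measure_univ
  rw [← heq] at hsum
  have h2 : (2 : ℝ≥0∞) * μ {x | g x = x (n x)} = 1 := by
    rw [two_mul]; exact hsum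
  rw [ENNReal.eq_div_iff (by norm_num) (by norm_num)]
  exact h2
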